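/- Let (Ω, 𝒜, μ) be a σ-finite measure space, let Θ ⊆ ℝ^M be open, and let f : Θ × Ω → (0,∞) be such that for every θ₁ ∈ Θ the function f(θ₁,·) is measurable with ∫_Ω f(θ₁,x) dμ(x) = 1, and for μ-almost every x the map θ₁ ↦ f(θ₁,x) is twice continuously differentiable. Let F : (0,∞) → ℝ be twice continuously differentiable with F(1) = 0. Fix θ ∈ Θ and define D(θ₁) = ∫_Ω F(f(θ₁,x)/f(θ,x)) f(θ,x) dμ(x). Assume that for all indices i, j the second partial derivative ∂²D/∂θ₁(i)∂θ₁(j) at θ₁ = θ exists and equals the integral over Ω of the corresponding second partial derivative of the integrand (differentiation under the integral sign), and assume ∫_Ω ∂²f(θ₁,x)/∂θ₁(i)∂θ₁(j)|_{θ₁=θ} dμ(x) = 0. Then for all i, j: ∂²D/∂θ₁(i)∂θ₁(j)|_{θ₁=θ} = F″(1) · ∫_Ω (∂ log f(θ₁,x)/∂θ₁(i)|_{θ₁=θ}) · (∂ log f(θ₁,x)/∂θ₁(j)|_{θ₁=θ}) · f(θ,x) dμ(x). That is, the Hessian of the f-divergence D at the diagonal equals F″(1) times the Fisher information matrix ℐ_θ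 of the family {f(θ₁,·)} at θ. -/

import Mathlib

open MeasureTheory

/-- Partial derivative of `h : ℝ^M → ℝ` in the `i`-th coordinate direction at `y`. -/
noncomputable def pd {M : ℕ} (i : Fin M) (h : (Fin M → ℝ) → ℝ) (y : Fin M → ℝ) : ℝ :=
  deriv (fun s : ℝ => h (y + s • (Pi.single i 1 : Fin M → ℝ))) 0

lemma line_hasDerivAt {M : ℕ} (y v : Fin M → ℝ) (s : ℝ) :
    HasDerivAt (fun s : ℝ => y + s • v) v s := by
  simpa using ((hasDerivAt_id s).smul_const v).const_add y

lemma gline_hasDerivAt {M : ℕ} {Θ : Set (Fin M → ℝ)} (hΘ : IsOpen Θ)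
    {g : (Fin M → ℝ) → ℝ} (hg : ContDiffOn ℝ 2 g Θ)
    {y : Fin M → ℝ} (hy : y ∈ Θ) (v : Fin M → ℝ) :
    HasDerivAt (fun s : ℝ => g (y + s • v)) (fderiv ℝ g y v) 0 := by
  have hgd : DifferentiableAt ℝ g y :=
    (hg.contDiffAt (hΘ.mem_nhds hy)).differentiableAt (by norm_num)
  have h1 : HasFDerivAt g (fderiv ℝ g y) (y + (0:ℝ) • v) := by
    simpa using hgd.hasFDerivAt
  have h2 := h1.comp_hasDerivAt 0 (line_hasDerivAt y v 0)
  exact h2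

lemma pd_eq_fderiv {M : ℕ} {Θ : Set (Fin M → ℝ)} (hΘ : IsOpen Θ)
    {g : (Fin M → ℝ) → ℝ} (hg : ContDiffOn ℝ 2 g Θ)
    {y : Fin M → ℝ} (hy : y ∈ Θ) (k : Fin M) :
    pd k g y = fderiv ℝ g y (Pi.single k 1) :=
  (gline_hasDerivAt hΘ hg hy _).deriv

lemma key {M : ℕ} {Θ : Set (Fin M → ℝ)} (hΘ : IsOpen Θ)
    (g : (Fin M → ℝ) → ℝ) (hg : ContDiffOn ℝ 2 g Θ)
    (hgpos : ∀ y ∈ Θ, 0 < g y)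
    (F : ℝ → ℝ) (hF : ContDiffOn ℝ 2 F (Set.Ioi 0))
    (θ : Fin M → ℝ) (hθ : θ ∈ Θ) (i j : Fin M) :
    pd i (pd j (fun θ₁ => F (g θ₁ / g θ) * g θ)) θ
      = deriv (deriv F) 1 *
          (pd i (fun θ₁ => Real.log (g θ₁)) θ * pd j (fun θ₁ => Real.log (g θ₁)) θ * g θ)
        + deriv F 1 * pd i (pd j g) θ := by
  set c := g θ with hcdef
  have hc : 0 < c := hgpos θ hθ
  have hcne : c ≠ 0 := ne_of_gt hc
  set ei : Fin M → ℝ := Pi.single i 1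
  set ej : Fin M → ℝ := Pi.single j 1
  -- Step A: for y ∈ Θ, pd j of the integrand equals deriv F (g y / c) * fderiv g y ej
  have stepA : ∀ y ∈ Θ, pd j (fun θ₁ => F (g θ₁ / c) * c) y
      = deriv F (g y / c) * fderiv ℝ g y ej := by
    intro y hy
    have hq : HasDerivAt (fun s : ℝ => g (y + s • ej) / c) (fderiv ℝ g y ej / c) 0 :=
      (gline_hasDerivAt hΘ hg hy ej).div_const c
    have hmem : g y / c ∈ Set.Ioi (0:ℝ) := div_pos (hgpos y hy) hc
    have hFd : HasDerivAt F (deriv F (g y / c)) (g y / c) :=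
      ((hF.contDiffAt (isOpen_Ioi.mem_nhds hmem)).differentiableAt
        (by norm_num)).hasDerivAt
    have hq0 : g (y + (0:ℝ) • ej) / c = g y / c := by simp
    have hFd' : HasDerivAt F (deriv F (g y / c)) (g (y + (0:ℝ) • ej) / c) := by
      rw [hq0]; exact hFd
    have hcomp : HasDerivAt (fun s : ℝ => F (g (y + s • ej) / c) * c)
        (deriv F (g y / c) * (fderiv ℝ g y ej / c) * c) 0 :=
      (hFd'.comp 0 hq).mul_const c
    have := hcomp.deriv
    rw [pd, this]
    field_simp
  -- the second-derivative of F exists at 1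
  have hF' : ContDiffOn ℝ 1 (deriv F) (Set.Ioi 0) :=
    hF.deriv_of_isOpen isOpen_Ioi (by norm_num)
  have hF''d : HasDerivAt (deriv F) (deriv (deriv F) 1) 1 :=
    ((hF'.contDiffAt (isOpen_Ioi.mem_nhds (by norm_num))).differentiableAt
      (by norm_num)).hasDerivAt
  -- Φ y = fderiv g y ej is differentiable at θ
  have hΦ : DifferentiableAt ℝ (fun y => fderiv ℝ g y ej) θ := by
    have h2 : ContDiffAt ℝ 2 g θ := hg.contDiffAt (hΘ.mem_nhds hθ)
    have h3 : ContDiffAt ℝ 1 (fderiv ℝ g) θ := h2.fderiv_right (by norm_num)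
    exact (h3.differentiableAt (by norm_num)).clm_apply (differentiableAt_const _)
  -- v : the j-partial along the i-line
  have hv : HasDerivAt (fun s : ℝ => fderiv ℝ g (θ + s • ei) ej)
      (deriv (fun s : ℝ => fderiv ℝ g (θ + s • ei) ej) 0) 0 := by
    have : DifferentiableAt ℝ (fun s : ℝ => fderiv ℝ g (θ + s • ei) ej) 0 := by
      have h0 : θ + (0:ℝ) • ei = θ := by simp
      have hΦ' : DifferentiableAt ℝ (fun y => fderiv ℝ g y ej) (θ + (0:ℝ) • ei) := by
        rw [h0]; exact hΦ
      have h1 := hΦ'.comp 0 (line_hasDerivAt θ ei 0).differentiableAt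
      exact h1
    exact this.hasDerivAt
  set v' := deriv (fun s : ℝ => fderiv ℝ g (θ + s • ei) ej) 0 with hv'def
  -- u : s ↦ deriv F (g(θ+s·ei)/c)
  have hq : HasDerivAt (fun s : ℝ => g (θ + s • ei) / c) (fderiv ℝ g θ ei / c) 0 :=
    (gline_hasDerivAt hΘ hg hθ ei).div_const c
  have hq0 : g (θ + (0:ℝ) • ei) / c = 1 := by simp [hcdef, div_self hcne, (hgpos θ hθ).ne']
  have hu : HasDerivAt (fun s : ℝ => deriv F (g (θ + s • ei) / c))
      (deriv (deriv F) 1 * (fderiv ℝ g θ ei / c)) 0 := by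
    have hF''d' : HasDerivAt (deriv F) (deriv (deriv F) 1) (g (θ + (0:ℝ) • ei) / c) := by
      rw [hq0]; exact hF''d
    exact hF''d'.comp 0 hq
  -- ψ : product
  have hψ : HasDerivAt (fun s : ℝ => deriv F (g (θ + s • ei) / c) * fderiv ℝ g (θ + s • ei) ej)
      (deriv (deriv F) 1 * (fderiv ℝ g θ ei / c) * fderiv ℝ g θ ej
        + deriv F 1 * v') 0 := by
    have hone : g θ / c = 1 := by rw [← hcdef]; exact div_self hcne
    have := hu.mul hv
    exact this.congr_deriv (by simp [hone])
  -- neighbourhood membership of the line in Θ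
  have hline_mem : ∀ᶠ s : ℝ in nhds 0, θ + s • ei ∈ Θ := by
    have hc0 : Continuous (fun s : ℝ => θ + s • ei) := by fun_prop
    have : θ + (0:ℝ) • ei ∈ Θ := by simpa using hθ
    exact hc0.continuousAt.eventually_mem (hΘ.mem_nhds this)
  -- pd i (pd j h) θ = deriv ψ 0
  have hEq1 : (fun s : ℝ => pd j (fun θ₁ => F (g θ₁ / c) * c) (θ + s • ei))
      =ᶠ[nhds 0] (fun s : ℝ => deriv F (g (θ + s • ei) / c) * fderiv ℝ g (θ + s • ei) ej) := by
    filter_upwards [hline_mem] with s hs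
    exact stepA _ hs
  have hmain : pd i (pd j (fun θ₁ => F (g θ₁ / c) * c)) θ
      = deriv (deriv F) 1 * (fderiv ℝ g θ ei / c) * fderiv ℝ g θ ej + deriv F 1 * v' := by
    rw [pd, hEq1.deriv_eq, hψ.deriv]
  -- pd i (pd j g) θ = v'
  have hEq2 : (fun s : ℝ => pd j g (θ + s • ei))
      =ᶠ[nhds 0] (fun s : ℝ => fderiv ℝ g (θ + s • ei) ej) := by
    filter_upwards [hline_mem] with s hs
    exact pd_eq_fderiv hΘ hg hs j
  have hpdij : pd i (pd j g) θ = v' := by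
    rw [pd, hEq2.deriv_eq]
  -- log partials
  have hlog : ∀ k : Fin M, pd k (fun θ₁ => Real.log (g θ₁)) θ = fderiv ℝ g θ (Pi.single k 1) / c := by
    intro k
    have hgl := gline_hasDerivAt hΘ hg hθ (Pi.single k 1)
    have hL : HasDerivAt Real.log c⁻¹ (g (θ + (0:ℝ) • (Pi.single k 1 : Fin M → ℝ))) := by
      simpa [hcdef] using Real.hasDerivAt_log hcne
    have hcomp : HasDerivAt (fun s : ℝ => Real.log (g (θ + s • (Pi.single k 1 : Fin M → ℝ))))
        (c⁻¹ * fderiv ℝ g θ (Pi.single k 1)) 0 := by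
      have h1 := hL.comp 0 hgl
      exact h1
    rw [pd, hcomp.deriv]
    exact inv_mul_eq_div _ _
  rw [hmain, hpdij, hlog i, hlog j]
  field_simp
  ring

/-- The Hessian (at the diagonal) of a smooth `f`-divergence
`D(θ₁) = ∫ F(f(θ₁,x)/f(θ,x)) f(θ,x) dμ` equals `F''(1)` times the Fisher information
matrix: assuming differentiation under the integral sign is valid for the second partial
derivatives and `∫ ∂²f/∂θ₁(i)∂θ₁(j)|_{θ₁=θ} dμ = 0`, we have
`∂²D/∂θ₁(i)∂θ₁(j)|_{θ₁=θ} = F''(1) · ∫ (∂ᵢ log f)(∂ⱼ log f) f(θ,·) dμ`. -/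
theorem stmt9 {Ω : Type*} [MeasurableSpace Ω] (μ : Measure Ω) [SigmaFinite μ]
    (M : ℕ) (Θ : Set (Fin M → ℝ)) (hΘ : IsOpen Θ)
    (f : (Fin M → ℝ) → Ω → ℝ)
    (hpos : ∀ θ₁ ∈ Θ, ∀ x, 0 < f θ₁ x)
    (hmeas : ∀ θ₁ ∈ Θ, Measurable (f θ₁))
    (hint : ∀ θ₁ ∈ Θ, ∫ x, f θ₁ x ∂μ = 1)
    (hsmooth : ∀ᵐ x ∂μ, ContDiffOn ℝ 2 (fun θ₁ => f θ₁ x) Θ)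
    (F : ℝ → ℝ) (hF : ContDiffOn ℝ 2 F (Set.Ioi 0)) (hF1 : F 1 = 0)
    (θ : Fin M → ℝ) (hθ : θ ∈ Θ)
    (D : (Fin M → ℝ) → ℝ)
    (hD : ∀ θ₁ ∈ Θ, D θ₁ = ∫ x, F (f θ₁ x / f θ x) * f θ x ∂μ)
    (hDUIint : ∀ i j : Fin M,
      Integrable (fun x => pd i (pd j (fun θ₁ => F (f θ₁ x / f θ x) * f θ x)) θ) μ ∧
      Integrable (fun x => pd i (pd j (fun θ₁ => f θ₁ x)) θ) μ ∧
      Integrable (fun x =>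
        pd i (fun θ₁ => Real.log (f θ₁ x)) θ * pd j (fun θ₁ => Real.log (f θ₁ x)) θ *
          f θ x) μ)
    (hDUI : ∀ i j : Fin M,
      pd i (pd j D) θ
        = ∫ x, pd i (pd j (fun θ₁ => F (f θ₁ x / f θ x) * f θ x)) θ ∂μ)
    (hzero : ∀ i j : Fin M, ∫ x, pd i (pd j (fun θ₁ => f θ₁ x)) θ ∂μ = 0) :
    ∀ i j : Fin M,
      pd i (pd j D) θ
        = deriv (deriv F) 1 *
            ∫ x, pd i (fun θ₁ => Real.log (f θ₁ x)) θ *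
                  pd j (fun θ₁ => Real.log (f θ₁ x)) θ * f θ x ∂μ := by
  intro i j
  obtain ⟨hI1, hI2, hI3⟩ := hDUIint i j
  have hae : ∀ᵐ x ∂μ,
      pd i (pd j (fun θ₁ => F (f θ₁ x / f θ x) * f θ x)) θ
        = deriv (deriv F) 1 *
            (pd i (fun θ₁ => Real.log (f θ₁ x)) θ * pd j (fun θ₁ => Real.log (f θ₁ x)) θ *
              f θ x)
          + deriv F 1 * pd i (pd j (fun θ₁ => f θ₁ x)) θ := by
    filter_upwards [hsmooth] with x hx
    exact key hΘ (fun θ₁ => f θ₁ x) hx (fun y hy => hpos y hy x) F hF θ hθ i j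
  rw [hDUI i j, integral_congr_ae hae,
    integral_add (hI3.const_mul _) (hI2.const_mul _),
    integral_const_mul, integral_const_mul, hzero i j, mul_zero, add_zero]
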